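/- Define G(λ) = ∑_{k=0}^{∞} (1 + λk)/((k − λ)(1 + k²)) for real λ not in ℕ₀. If both λ and λ − 1 are not in ℕ₀ and λ ≠ 0, then G(λ) − G(λ − 1) = −1/λ. -/

import Mathlib

open Filter Asymptotics Topology

noncomputable def G (l : ℝ) : ℝ :=
  ∑' k : ℕ, (1 + l * k) / ((k - l) * (1 + (k : ℝ) ^ 2))

lemma summable_G (l : ℝ) (hl : ∀ n : ℕ, l ≠ n) :
    Summable (fun k : ℕ => (1 + l * k) / ((k - l) * (1 + (k : ℝ) ^ 2))) := by
  have hg : Summable (fun k : ℕ => 1 / (k : ℝ) ^ 2) := by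
    simpa using Real.summable_one_div_nat_pow.mpr (by norm_num : 1 < 2)
  refine summable_of_isBigO_nat hg ?_
  have hkl : ∀ k : ℕ, (k : ℝ) - l ≠ 0 := fun k => sub_ne_zero.mpr (Ne.symm (hl k))
  -- limit of f/g
  have hlim : Tendsto (fun k : ℕ =>
      (1 / (k : ℝ) + l) / ((1 - l / k) * (1 / (k : ℝ) ^ 2 + 1))) atTop (𝓝 l) := by
    have h1 : Tendsto (fun k : ℕ => 1 / (k : ℝ)) atTop (𝓝 0) :=
      tendsto_one_div_atTop_nhds_zero_nat
    have h2 : Tendsto (fun k : ℕ => l / (k : ℝ)) atTop (𝓝 0) := by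
      simpa [div_eq_mul_inv] using h1.const_mul l
    have h3 : Tendsto (fun k : ℕ => 1 / (k : ℝ) ^ 2) atTop (𝓝 0) := by
      have := h1.mul h1
      simpa [div_mul_div_comm, pow_two] using this
    have : Tendsto (fun k : ℕ =>
        (1 / (k : ℝ) + l) / ((1 - l / k) * (1 / (k : ℝ) ^ 2 + 1))) atTop
        (𝓝 ((0 + l) / ((1 - 0) * (0 + 1)))) := by
      exact (h1.add tendsto_const_nhds).div
        (((tendsto_const_nhds.sub h2).mul (h3.add tendsto_const_nhds))) (by norm_num)
    simpa using this
  refine isBigO_of_div_tendsto_nhds ?_ l ?_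
  · filter_upwards [eventually_ge_atTop 1] with k hk h0
    exfalso
    have : (k : ℝ) ≠ 0 := Nat.cast_ne_zero.mpr (by omega)
    simp [this] at h0
  · refine hlim.congr' ?_
    filter_upwards [eventually_ge_atTop 1] with k hk
    have hk0 : (k : ℝ) ≠ 0 := Nat.cast_ne_zero.mpr (by omega)
    have h3 : (1 : ℝ) + (k : ℝ) ^ 2 ≠ 0 := by positivity
    have hk1 : (k : ℝ) - l ≠ 0 := hkl k
    have h4 : 1 - l / (k : ℝ) ≠ 0 := by
      intro h
      apply hk1
      have : l / (k : ℝ) = 1 := by linarith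
      field_simp at this
      linarith
    have h5 : 1 / (k : ℝ) ^ 2 + 1 ≠ 0 := by positivity
    simp only [Pi.div_apply]
    field_simp

theorem stmt_6 (l : ℝ) (hl : ∀ n : ℕ, l ≠ n) (hl' : ∀ n : ℕ, l - 1 ≠ n)
    (hl0 : l ≠ 0) : G l - G (l - 1) = -1 / l := by
  have h1 := summable_G l hl
  have h2 := summable_G (l - 1) hl'
  set a : ℕ → ℝ := fun k => 1 / ((k : ℝ) - l) with ha
  have key : ∀ k : ℕ,
      (1 + l * k) / ((k - l) * (1 + (k : ℝ) ^ 2))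
        - (1 + (l - 1) * k) / ((k - (l - 1)) * (1 + (k : ℝ) ^ 2))
      = a k - a (k + 1) := by
    intro k
    have hk1 : (k : ℝ) - l ≠ 0 := sub_ne_zero.mpr (Ne.symm (hl k))
    have hk2 : (k : ℝ) - (l - 1) ≠ 0 := sub_ne_zero.mpr (Ne.symm (hl' k))
    have hk2' : ((k : ℝ) + 1) - l ≠ 0 := by
      intro h; apply hk2; linarith
    have h3 : (1 : ℝ) + (k : ℝ) ^ 2 ≠ 0 := by positivity
    simp only [ha, Nat.cast_add, Nat.cast_one]
    field_simp
    ring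
  have hS : Summable (fun k : ℕ => a k - a (k + 1)) :=
    (h1.sub h2).congr key
  have htel : HasSum (fun k : ℕ => a k - a (k + 1)) (a 0) := by
    rw [hS.hasSum_iff_tendsto_nat]
    have heq : ∀ n : ℕ, ∑ i ∈ Finset.range n, (a i - a (i + 1)) = a 0 - a n :=
      fun n => Finset.sum_range_sub' a n
    simp only [heq]
    have hzero : Tendsto a atTop (𝓝 0) := by
      have hat : Tendsto (fun k : ℕ => (k : ℝ) - l) atTop atTop := by
        simpa [sub_eq_add_neg] using
          tendsto_atTop_add_const_right atTop (-l) tendsto_natCast_atTop_atTop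
      simpa [ha, one_div, Pi.inv_def] using hat.inv_tendsto_atTop
    simpa using tendsto_const_nhds.sub hzero
  have : G l - G (l - 1) = a 0 := by
    rw [G, G, ← Summable.tsum_sub h1 h2]
    rw [← htel.tsum_eq]
    exact tsum_congr key
  rw [this]
  simp [ha]
  ring
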